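/- Let θ ∈ (ℝ/ℤ)∖{0} be rational. Then every accumulation point (x,y) of S_θ in 𝕋 intersects or separates P_θ. -/

import Mathlib

open Set Filter

/-- The circle `ℝ/ℤ`. -/
abbrev 𝕊 := AddCircle (1 : ℝ)

/-- The torus `𝕋 = (ℝ/ℤ) × (ℝ/ℤ)`. -/
abbrev 𝕋 := 𝕊 × 𝕊

/-- The doubling map `τ(x) = 2x` on the circle. -/
noncomputable def dbl : 𝕊 → 𝕊 := fun x => x + x

/-- The doubling map `F(x, y) = (2x, 2y)` on the torus. -/
noncomputable def F : 𝕋 → 𝕋 := fun p => (p.1 + p.1, p.2 + p.2)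

/-- The open arc of `(ℝ/ℤ) ∖ {a, b}` containing `z`, i.e. the connected component of
the complement of `{a, b}` containing `z`. -/
def arcAt (a b z : 𝕊) : Set 𝕊 := connectedComponentIn ({a, b}ᶜ : Set 𝕊) z

/-- The good region `G(a,b)` of a leaf with distinct endpoints `a, b`: the set of pairs
`(x, y)` such that `x` and `y` both lie in the closure of one and the same of the two
open arcs of `(ℝ/ℤ) ∖ {a, b}`. -/
def goodPair (a b : 𝕊) : Set 𝕋 :=
  {p | ∃ z ∈ ({a, b}ᶜ : Set 𝕊),
        p.1 ∈ closure (arcAt a b z) ∧ p.2 ∈ closure (arcAt a b z)}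

/-- The good region `G(S)` of a set `S ⊆ 𝕋`: the intersection of the good regions of
all off-diagonal points of `S`. -/
def good (S : Set 𝕋) : Set 𝕋 :=
  {p | ∀ q ∈ S, q.1 ≠ q.2 → p ∈ goodPair q.1 q.2}

/-- `α ∈ ℝ/ℤ` is periodic under the doubling map. -/
noncomputable def IsPer (α : 𝕊) : Prop := ∃ n > 0, dbl^[n] α = α

/-- The pre-major leaves: `b 0` consists of the two orderings of the major leaf
`{θ/2, (θ+1)/2}`, and `b (i+1) = (F⁻¹(b i) ∩ G(b i)) ∪ b i`. -/
noncomputable def preSeq (θ : ℝ) : ℕ → Set 𝕋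
  | 0 => {(((θ / 2 : ℝ) : 𝕊), (((θ + 1) / 2 : ℝ) : 𝕊)),
          ((((θ + 1) / 2 : ℝ) : 𝕊), ((θ / 2 : ℝ) : 𝕊))}
  | i + 1 => (F ⁻¹' preSeq θ i ∩ good (preSeq θ i)) ∪ preSeq θ i

/-- The set `Pre_θ` of pre-major leaves. -/
noncomputable def Pre (θ : ℝ) : Set 𝕋 := ⋃ i, preSeq θ i

/-- `L_θ`: the set of accumulation points of `Pre_θ` lying off the diagonal. -/
noncomputable def Lset (θ : ℝ) : Set 𝕋 :=
  {p | AccPt p (Filter.principal (Pre θ)) ∧ p.1 ≠ p.2}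

open Classical in
/-- `2⁻¹θ`: the periodic element among `{θ/2, (θ+1)/2}` if `θ` is periodic, and `θ/2`
otherwise. -/
noncomputable def halfTheta (θ : ℝ) : 𝕊 :=
  if IsPer ((θ : ℝ) : 𝕊) then
    (if IsPer ((θ / 2 : ℝ) : 𝕊) then ((θ / 2 : ℝ) : 𝕊) else (((θ + 1) / 2 : ℝ) : 𝕊))
  else ((θ / 2 : ℝ) : 𝕊)

/-- The post-major angle set `P^S_θ = {2⁻¹θ} ∪ {2ⁿθ : n ≥ 0}`. -/
noncomputable def PS (θ : ℝ) : Set 𝕊 :=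
  {halfTheta θ} ∪ {x | ∃ n : ℕ, x = dbl^[n] ((θ : ℝ) : 𝕊)}

/-- `(x, y)` separates `P_θ`: `x ≠ y` and both open arcs of `(ℝ/ℤ) ∖ {x, y}` contain a
point of `P^S_θ`. -/
noncomputable def SepP (θ : ℝ) (p : 𝕋) : Prop :=
  p.1 ≠ p.2 ∧ ∃ u ∈ PS θ, ∃ v ∈ PS θ,
    u ∈ ({p.1, p.2}ᶜ : Set 𝕊) ∧ v ∈ ({p.1, p.2}ᶜ : Set 𝕊) ∧ v ∉ arcAt p.1 p.2 u

/-- `(x, y)` intersects `P_θ`: `x ∈ P^S_θ` or `y ∈ P^S_θ`. -/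
noncomputable def IntP (θ : ℝ) (p : 𝕋) : Prop := p.1 ∈ PS θ ∨ p.2 ∈ PS θ

/-- `X_θ`: the points of `L_θ` which separate or intersect `P_θ`. -/
noncomputable def Xset (θ : ℝ) : Set 𝕋 :=
  {p ∈ Lset θ | SepP θ p ∨ IntP θ p}

/-- `S_θ`: the pre-major leaves which separate or intersect `P_θ`. -/
noncomputable def Sset (θ : ℝ) : Set 𝕋 :=
  {p ∈ Pre θ | SepP θ p ∨ IntP θ p}


/-! ### Auxiliary lemmas -/

section Aux

lemma my_coe_eq_coe_iff {r s : ℝ} : (r : 𝕊) = (s : 𝕊) ↔ ∃ k : ℤ, r - s = k := by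
  rw [show ((r : 𝕊) = (s : 𝕊)) ↔ ((r - s : ℝ) : 𝕊) = 0 by
    rw [AddCircle.coe_sub, sub_eq_zero]]
  rw [AddCircle.coe_eq_zero_iff]
  constructor
  · rintro ⟨n, hn⟩; exact ⟨n, by simpa using hn.symm⟩
  · rintro ⟨k, hk⟩; exact ⟨k, by simpa using hk.symm⟩

lemma my_coe_ne {r s : ℝ} (h0 : r ≠ s) (h1 : |r - s| < 1) : (r : 𝕊) ≠ (s : 𝕊) := by
  rw [Ne, my_coe_eq_coe_iff]
  rintro ⟨k, hk⟩
  rw [hk] at h1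
  have h2 : -1 < (k : ℝ) ∧ (k : ℝ) < 1 := abs_lt.mp h1
  have h3 : k ≠ 0 := by rintro rfl; simp at hk; exact h0 (by linarith)
  have h4 : -1 < k := by exact_mod_cast h2.1
  have h5 : k < 1 := by exact_mod_cast h2.2
  omega

lemma coe_add_one (c : ℝ) : ((c + 1 : ℝ) : 𝕊) = (c : 𝕊) :=
  my_coe_eq_coe_iff.mpr ⟨1, by push_cast; ring⟩

lemma exists_lift_Ioc (x : 𝕊) (c : ℝ) : ∃ r ∈ Ioc c (c + 1), (r : 𝕊) = x := by
  obtain ⟨r0, rfl⟩ := QuotientAddGroup.mk_surjective x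
  refine ⟨r0 - ⌈r0 - (c + 1)⌉, ⟨?_, ?_⟩, ?_⟩
  · have := Int.ceil_lt_add_one (r0 - (c + 1)); linarith
  · have := Int.le_ceil (r0 - (c + 1)); linarith
  · exact my_coe_eq_coe_iff.mpr ⟨-⌈r0 - (c + 1)⌉, by push_cast; ring⟩

/-- The open arc which is the image of `Ioo c d`. -/
noncomputable def arc (c d : ℝ) : Set 𝕊 := (fun r : ℝ => (r : 𝕊)) '' Ioo c d

lemma arc_open (c d : ℝ) : IsOpen (arc c d) :=
  QuotientAddGroup.isOpenMap_coe _ isOpen_Ioo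

lemma arc_preconn (c d : ℝ) : IsPreconnected (arc c d) :=
  isPreconnected_Ioo.image _ (AddCircle.continuous_mk' 1).continuousOn

lemma mem_arc {c d r : ℝ} (h : r ∈ Ioo c d) : (r : 𝕊) ∈ arc c d := ⟨r, h, rfl⟩

lemma arc_subset_compl {c d : ℝ} (h : d ≤ c + 1) :
    arc c d ⊆ ({(c : 𝕊), (d : 𝕊)}ᶜ : Set 𝕊) := by
  rintro _ ⟨r, hr, rfl⟩
  simp only [mem_compl_iff, mem_insert_iff, mem_singleton_iff, not_or]
  refine ⟨my_coe_ne (by linarith [hr.1]) ?_, my_coe_ne (by linarith [hr.2]) ?_⟩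
  · rw [abs_of_pos (by linarith [hr.1])]; linarith [hr.2]
  · rw [abs_of_neg (by linarith [hr.2])]; linarith [hr.1]

lemma arcB_subset_compl {c d : ℝ} (h1 : c < d) :
    arc d (c + 1) ⊆ ({(c : 𝕊), (d : 𝕊)}ᶜ : Set 𝕊) := by
  have e : ({(d : 𝕊), ((c + 1 : ℝ) : 𝕊)} : Set 𝕊) = {(c : 𝕊), (d : 𝕊)} := by
    rw [coe_add_one, Set.pair_comm]
  have h := arc_subset_compl (show c + 1 ≤ d + 1 by linarith) (c := d) (d := c + 1)
  rwa [e] at h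

lemma compl_subset_arcs {c d : ℝ} (h1 : c < d) (h2 : d < c + 1) :
    ({(c : 𝕊), (d : 𝕊)}ᶜ : Set 𝕊) ⊆ arc c d ∪ arc d (c + 1) := by
  intro x hx
  simp only [mem_compl_iff, mem_insert_iff, mem_singleton_iff, not_or] at hx
  obtain ⟨r, hr, rfl⟩ := exists_lift_Ioc x c
  have hrc : r ≠ c + 1 := by rintro rfl; exact hx.1 (coe_add_one c)
  have hrd : r ≠ d := by rintro rfl; exact hx.2 rfl
  rcases lt_or_gt_of_ne hrd with h | h
  · exact Or.inl (mem_arc ⟨hr.1, h⟩)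
  · exact Or.inr (mem_arc ⟨h, lt_of_le_of_ne hr.2 hrc⟩)

lemma arc_disjoint {c d : ℝ} (h1 : c < d) (h2 : d < c + 1) :
    Disjoint (arc c d) (arc d (c + 1)) := by
  rw [Set.disjoint_left]
  rintro _ ⟨r, hr, rfl⟩ ⟨s, hs, hsr⟩
  exact my_coe_ne (show s ≠ r from (by linarith [hr.2, hs.1] : r < s).ne')
    (by rw [abs_of_pos (by linarith [hr.2, hs.1])]; linarith [hs.2, hr.1]) hsr

lemma arcAt_eq_left {c d : ℝ} (h1 : c < d) (h2 : d < c + 1) {z : 𝕊} (hz : z ∈ arc c d) :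
    arcAt (c : 𝕊) (d : 𝕊) z = arc c d := by
  have hAc : arc c d ⊆ ({(c : 𝕊), (d : 𝕊)}ᶜ : Set 𝕊) := arc_subset_compl (by linarith)
  apply subset_antisymm
  · have hsub : arcAt (c : 𝕊) (d : 𝕊) z ⊆ arc c d ∪ arc d (c + 1) :=
      (connectedComponentIn_subset _ _).trans (compl_subset_arcs h1 h2)
    rcases IsPreconnected.subset_or_subset (arc_open c d) (arc_open d (c + 1))
        (arc_disjoint h1 h2) hsub isPreconnected_connectedComponentIn with h | h
    · exact h
    · exact absurd (h (mem_connectedComponentIn (hAc hz)))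
        (Set.disjoint_left.mp (arc_disjoint h1 h2) hz)
  · exact (arc_preconn c d).subset_connectedComponentIn hz hAc

lemma arcAt_comm (a b z : 𝕊) : arcAt a b z = arcAt b a z := by
  simp only [arcAt, Set.pair_comm]

lemma intP_def {θ : ℝ} {a b : 𝕊} : IntP θ (a, b) ↔ (a ∈ PS θ ∨ b ∈ PS θ) := Iff.rfl

lemma sepP_def {θ : ℝ} {a b : 𝕊} :
    SepP θ (a, b) ↔ (a ≠ b ∧ ∃ u ∈ PS θ, ∃ v ∈ PS θ,
      u ∈ ({a, b}ᶜ : Set 𝕊) ∧ v ∈ ({a, b}ᶜ : Set 𝕊) ∧ v ∉ arcAt a b u) := Iff.rfl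

lemma intP_swap {θ : ℝ} {a b : 𝕊} (h : IntP θ (a, b)) : IntP θ (b, a) := by
  rw [intP_def] at h ⊢; exact h.symm

lemma sepP_swap {θ : ℝ} {a b : 𝕊} (h : SepP θ (a, b)) : SepP θ (b, a) := by
  rw [sepP_def] at h ⊢
  obtain ⟨hne, u, hu, v, hv, hu', hv', hvn⟩ := h
  have e : ({b, a} : Set 𝕊) = {a, b} := Set.pair_comm b a
  refine ⟨hne.symm, u, hu, v, hv, ?_, ?_, ?_⟩
  · rw [e]; exact hu'
  · rw [e]; exact hv'
  · rw [arcAt_comm]; exact hvn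

lemma main_nbhd (θ s t : ℝ) (hst : s < t) (hts : t < s + 1)
    (hPS : ∀ w ∈ PS θ, ∃ r ∈ Ioo t (s + 1), (r : 𝕊) = w) :
    ¬ IntP θ (((s : ℝ) : 𝕊), ((t : ℝ) : 𝕊)) ∧ ¬ SepP θ (((s : ℝ) : 𝕊), ((t : ℝ) : 𝕊)) := by
  constructor
  · rw [intP_def]
    rintro (h | h)
    · obtain ⟨r, hr, hrs⟩ := hPS _ h
      exact my_coe_ne (show r ≠ s from (lt_trans hst hr.1).ne')
        (by rw [abs_of_pos (by linarith [hr.1])]; linarith [hr.2]) hrs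
    · obtain ⟨r, hr, hrt⟩ := hPS _ h
      exact my_coe_ne hr.1.ne'
        (by rw [abs_of_pos (by linarith [hr.1])]; linarith [hr.2]) hrt
  · rw [sepP_def]
    rintro ⟨hne, u, hu, v, hv, hu', hv', hvn⟩
    apply hvn
    obtain ⟨ru, hru, hruu⟩ := hPS u hu
    obtain ⟨rv, hrv, hrvv⟩ := hPS v hv
    have hc : arc t (s + 1) ⊆ ({((s : ℝ) : 𝕊), ((t : ℝ) : 𝕊)}ᶜ : Set 𝕊) :=
      arcB_subset_compl hst
    have hss := (arc_preconn t (s + 1)).subset_connectedComponentIn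
      (hruu ▸ mem_arc hru) hc
    exact hss (hrvv ▸ mem_arc hrv)

end Aux

section Aux2

lemma dbl_iter_coe (r : ℝ) (n : ℕ) : dbl^[n] ((r : ℝ) : 𝕊) = ((2 ^ n * r : ℝ) : 𝕊) := by
  induction n with
  | zero => simp
  | succ n ih =>
    rw [Function.iterate_succ_apply', ih]
    show ((2 ^ n * r : ℝ) : 𝕊) + ((2 ^ n * r : ℝ) : 𝕊) = _
    rw [← AddCircle.coe_add]
    congr 1; ring

lemma PS_finite (θ : ℝ) (q : ℚ) (hq : (q : ℝ) = θ) : (PS θ).Finite := by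
  have hdpos : (0 : ℤ) < (q.den : ℤ) := by exact_mod_cast q.pos
  have hsub : PS θ ⊆ insert (halfTheta θ)
      ((fun k : ℕ => (((k : ℝ) / (q.den : ℝ)) : 𝕊)) '' Set.Iio q.den) := by
    intro x hx
    simp only [PS, Set.mem_union, Set.mem_singleton_iff, Set.mem_setOf_eq] at hx
    rcases hx with hx | ⟨n, rfl⟩
    · exact Set.mem_insert_iff.mpr (Or.inl hx)
    · refine Set.mem_insert_iff.mpr (Or.inr ?_)
      rw [dbl_iter_coe]
      set m : ℤ := (2 ^ n * q.num) % (q.den : ℤ) with hm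
      have h0 : 0 ≤ m := Int.emod_nonneg _ hdpos.ne'
      have h1 : m < (q.den : ℤ) := Int.emod_lt_of_pos _ hdpos
      refine ⟨m.toNat, ?_, ?_⟩
      · simp only [Set.mem_Iio]; omega
      · rw [my_coe_eq_coe_iff, ← hq, Rat.cast_def]
        refine ⟨-((2 ^ n * q.num) / (q.den : ℤ)), ?_⟩
        have hdm := Int.mul_ediv_add_emod (2 ^ n * q.num) (q.den : ℤ)
        have hcast : (q.den : ℝ) * (((2 ^ n * q.num) / (q.den : ℤ) : ℤ) : ℝ)
            + ((((2 ^ n * q.num) % (q.den : ℤ) : ℤ)) : ℝ)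
            = 2 ^ n * (q.num : ℝ) := by exact_mod_cast hdm
        rw [← hm] at hcast
        have hden : (q.den : ℝ) ≠ 0 := by exact_mod_cast hdpos.ne'
        have htn : ((m.toNat : ℕ) : ℝ) = (m : ℝ) := by exact_mod_cast Int.toNat_of_nonneg h0
        field_simp
        push_cast
        rw [htn]
        linarith [hcast]
  exact ((Set.finite_Iio _).image _ |>.insert _).subset hsub

lemma exists_eps {S : Set ℝ} (hS : S.Finite) {c d : ℝ} (hcd : c < d) (hsub : S ⊆ Ioo c d) :
    ∃ ε > 0, ∀ r ∈ S, c + ε < r ∧ r < d - ε := by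
  rcases S.eq_empty_or_nonempty with rfl | hne
  · exact ⟨(d - c) / 2, by linarith, by simp⟩
  · have hTne : hS.toFinset.Nonempty := by
      rwa [Set.Finite.toFinset_nonempty]
    set m := hS.toFinset.min' hTne with hmdef
    set M := hS.toFinset.max' hTne with hMdef
    have hm : m ∈ S := by
      have := hS.toFinset.min'_mem hTne
      rwa [Set.Finite.mem_toFinset] at this
    have hM : M ∈ S := by
      have := hS.toFinset.max'_mem hTne
      rwa [Set.Finite.mem_toFinset] at this
    have hmc := (hsub hm).1
    have hMd := (hsub hM).2
    refine ⟨min ((m - c) / 2) ((d - M) / 2), lt_min (by linarith) (by linarith), ?_⟩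
    intro r hr
    have h1 : m ≤ r := hS.toFinset.min'_le r (Set.Finite.mem_toFinset hS |>.mpr hr)
    have h2 : r ≤ M := hS.toFinset.le_max' r (Set.Finite.mem_toFinset hS |>.mpr hr)
    constructor
    · have := min_le_left ((m - c) / 2) ((d - M) / 2); linarith
    · have := min_le_right ((m - c) / 2) ((d - M) / 2); linarith

end Aux2

section Main

lemma compl_open (θ : ℝ) (hfin : (PS θ).Finite) :
    IsOpen {p : 𝕋 | ¬(IntP θ p ∨ SepP θ p)} := by
  rw [isOpen_iff_mem_nhds]
  rintro ⟨x, y⟩ hp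
  simp only [mem_setOf_eq, not_or] at hp
  obtain ⟨hInt, hSep⟩ := hp
  have hx : x ∉ PS θ := fun h => hInt (intP_def.mpr (Or.inl h))
  have hy : y ∉ PS θ := fun h => hInt (intP_def.mpr (Or.inr h))
  by_cases hxy : x = y
  · -- diagonal case
    subst hxy
    obtain ⟨x0, hx0⟩ := QuotientAddGroup.mk_surjective x
    have hopen : IsOpen ((fun r : ℝ => (r : 𝕊)) ⁻¹' (PS θ)ᶜ) :=
      hfin.isClosed.isOpen_compl.preimage (AddCircle.continuous_mk' 1)
    have hx0mem : x0 ∈ (fun r : ℝ => (r : 𝕊)) ⁻¹' (PS θ)ᶜ := by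
      simp only [Set.mem_preimage, Set.mem_compl_iff]
      rw [hx0]; exact hx
    obtain ⟨ε0, hε0, hball⟩ := Metric.isOpen_iff.mp hopen x0 hx0mem
    set ε := min ε0 (1 / 2) with hεdef
    have hεpos : 0 < ε := lt_min hε0 (by norm_num)
    have hεa : ε ≤ ε0 := min_le_left _ _
    have hεb : ε ≤ 1 / 2 := min_le_right _ _
    have harc : ∀ w ∈ PS θ, w ∉ arc (x0 - ε) (x0 + ε) := by
      rintro w hw ⟨r, hr, rfl⟩
      have hrb : r ∈ Metric.ball x0 ε0 := by
        rw [Real.ball_eq_Ioo]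
        exact ⟨by linarith [hr.1], by linarith [hr.2]⟩
      exact hball hrb hw
    have key : ∀ s t : ℝ, s ∈ Ioo (x0 - ε) (x0 + ε) → t ∈ Ioo (x0 - ε) (x0 + ε) →
        ∀ w ∈ PS θ, ∃ r ∈ Ioo t (s + 1), (r : 𝕊) = w := by
      intro s t hs ht w hw
      obtain ⟨r, hr, hrw⟩ := exists_lift_Ioc w t
      by_cases hc : r < s + 1
      · exact ⟨r, ⟨hr.1, hc⟩, hrw⟩
      · exfalso
        push_neg at hc
        refine harc w hw ⟨r - 1, ⟨by linarith [hs.1], by linarith [ht.2, hr.2]⟩, ?_⟩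
        rw [← hrw]
        exact my_coe_eq_coe_iff.mpr ⟨-1, by push_cast; ring⟩
    refine Filter.mem_of_superset
      (((arc_open (x0 - ε) (x0 + ε)).prod (arc_open (x0 - ε) (x0 + ε))).mem_nhds
        ⟨?_, ?_⟩) ?_
    · rw [← hx0]; exact mem_arc ⟨by linarith, by linarith⟩
    · rw [← hx0]; exact mem_arc ⟨by linarith, by linarith⟩
    · rintro ⟨q1, q2⟩ ⟨⟨s, hs, rfl⟩, ⟨t, ht, rfl⟩⟩
      simp only [mem_setOf_eq, not_or]
      rcases lt_trichotomy s t with h | h | h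
      · exact main_nbhd θ s t h (by linarith [hs.1, ht.2]) (key s t hs ht)
      · subst h
        constructor
        · intro hi
          rcases intP_def.mp hi with h' | h' <;> exact harc _ h' (mem_arc hs)
        · intro hsep
          exact (sepP_def.mp hsep).1 rfl
      · obtain ⟨hI, hS⟩ := main_nbhd θ t s h (by linarith [ht.1, hs.2]) (key t s ht hs)
        exact ⟨fun h' => hI (intP_swap h'), fun h' => hS (sepP_swap h')⟩
  · -- off-diagonal case
    obtain ⟨ξ, hξ⟩ := QuotientAddGroup.mk_surjective x
    obtain ⟨η, hη, hηy⟩ := exists_lift_Ioc y ξ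
    have hη1 : η < ξ + 1 := lt_of_le_of_ne hη.2
      (fun h => hxy (by rw [← hξ, ← hηy, h, coe_add_one]))
    have hξη : ξ < η := hη.1
    have hcover : ∀ w ∈ PS θ, w ∈ arc ξ η ∪ arc η (ξ + 1) := by
      intro w hw
      apply compl_subset_arcs hξη hη1
      simp only [mem_compl_iff, mem_insert_iff, mem_singleton_iff, not_or]
      constructor
      · intro h; apply hx; rw [← hξ, ← h]; exact hw
      · intro h; apply hy; rw [← hηy, ← h]; exact hw
    have hdi : (∀ w ∈ PS θ, w ∈ arc ξ η) ∨ (∀ w ∈ PS θ, w ∈ arc η (ξ + 1)) := by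
      by_contra hcon
      push_neg at hcon
      obtain ⟨⟨u, hu, huA⟩, ⟨v, hv, hvB⟩⟩ := hcon
      have huB : u ∈ arc η (ξ + 1) := (hcover u hu).resolve_left huA
      have hvA : v ∈ arc ξ η := (hcover v hv).resolve_right hvB
      apply hSep
      rw [show ((x, y) : 𝕋) = (((ξ : ℝ) : 𝕊), ((η : ℝ) : 𝕊)) by rw [hξ, hηy]]
      rw [sepP_def]
      refine ⟨?_, v, hv, u, hu, arc_subset_compl hη1.le hvA, arcB_subset_compl hξη huB, ?_⟩
      · rw [hξ, hηy]; exact hxy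
      · rw [arcAt_eq_left hξη hη1 hvA]
        exact fun hu' => Set.disjoint_left.mp (arc_disjoint hξη hη1) hu' huB
    rcases hdi with hA | hB
    · -- all of PS in the arc (ξ, η); work with swapped coordinates
      have hAex : ∀ w ∈ PS θ, ∃ r, r ∈ Ioo ξ η ∧ (r : 𝕊) = w := fun w hw => hA w hw
      choose! f hf1 hf2 using hAex
      have hsub' : f '' PS θ ⊆ Ioo ξ η := by rintro _ ⟨w, hw, rfl⟩; exact hf1 w hw
      obtain ⟨ε1, hε1, heps⟩ := exists_eps (hfin.image f) hξη hsub'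
      set ε := min ε1 (min ((η - ξ) / 2) ((ξ + 1 - η) / 2)) with hεdef
      have hεpos : 0 < ε := lt_min hε1 (lt_min (by linarith) (by linarith))
      have hεa : ε ≤ ε1 := min_le_left _ _
      have hεb : ε ≤ (η - ξ) / 2 := (min_le_right _ _).trans (min_le_left _ _)
      have hεc : ε ≤ (ξ + 1 - η) / 2 := (min_le_right _ _).trans (min_le_right _ _)
      refine Filter.mem_of_superset
        (((arc_open (ξ + 1 - ε) (ξ + 1 + ε)).prod (arc_open (η - ε) (η + ε))).mem_nhds
          ⟨?_, ?_⟩) ?_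
      · rw [← hξ, ← coe_add_one]; exact mem_arc ⟨by linarith, by linarith⟩
      · rw [← hηy]; exact mem_arc ⟨by linarith, by linarith⟩
      · rintro ⟨q1, q2⟩ ⟨⟨t, ht, rfl⟩, ⟨s, hs, rfl⟩⟩
        simp only [mem_setOf_eq, not_or]
        have hst : s < t := by linarith [hs.2, ht.1]
        have hts : t < s + 1 := by linarith [hs.1, ht.2]
        obtain ⟨hI, hS⟩ := main_nbhd θ s t hst hts (fun w hw => by
          have h1 := (heps (f w) ⟨w, hw, rfl⟩).1
          have h2 := (heps (f w) ⟨w, hw, rfl⟩).2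
          exact ⟨f w + 1, ⟨by linarith [ht.2], by linarith [hs.1]⟩,
            by rw [coe_add_one]; exact hf2 w hw⟩)
        exact ⟨fun h' => hI (intP_swap h'), fun h' => hS (sepP_swap h')⟩
    · -- all of PS in the arc (η, ξ + 1)
      have hBex : ∀ w ∈ PS θ, ∃ r, r ∈ Ioo η (ξ + 1) ∧ (r : 𝕊) = w := fun w hw => hB w hw
      choose! f hf1 hf2 using hBex
      have hsub' : f '' PS θ ⊆ Ioo η (ξ + 1) := by rintro _ ⟨w, hw, rfl⟩; exact hf1 w hw
      obtain ⟨ε1, hε1, heps⟩ := exists_eps (hfin.image f) (by linarith) hsub'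
      set ε := min ε1 (min ((η - ξ) / 2) ((ξ + 1 - η) / 2)) with hεdef
      have hεpos : 0 < ε := lt_min hε1 (lt_min (by linarith) (by linarith))
      have hεa : ε ≤ ε1 := min_le_left _ _
      have hεb : ε ≤ (η - ξ) / 2 := (min_le_right _ _).trans (min_le_left _ _)
      have hεc : ε ≤ (ξ + 1 - η) / 2 := (min_le_right _ _).trans (min_le_right _ _)
      refine Filter.mem_of_superset
        (((arc_open (ξ - ε) (ξ + ε)).prod (arc_open (η - ε) (η + ε))).mem_nhds
          ⟨?_, ?_⟩) ?_
      · rw [← hξ]; exact mem_arc ⟨by linarith, by linarith⟩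
      · rw [← hηy]; exact mem_arc ⟨by linarith, by linarith⟩
      · rintro ⟨q1, q2⟩ ⟨⟨s, hs, rfl⟩, ⟨t, ht, rfl⟩⟩
        simp only [mem_setOf_eq, not_or]
        have hst : s < t := by linarith [hs.2, ht.1]
        have hts : t < s + 1 := by linarith [hs.1, ht.2]
        exact main_nbhd θ s t hst hts (fun w hw => by
          have h1 := (heps (f w) ⟨w, hw, rfl⟩).1
          have h2 := (heps (f w) ⟨w, hw, rfl⟩).2
          exact ⟨f w, ⟨by linarith [ht.2], by linarith [hs.1]⟩, hf2 w hw⟩)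

end Main

/-- For rational `θ ∈ (ℝ/ℤ) ∖ {0}` (with representative `θ̂ ∈ (0,1)`),
every accumulation point of `S_θ` in the torus intersects or separates `P_θ`. -/
theorem cluster_Sset_separates_or_intersects (θ : ℝ) (hθ : θ ∈ Ioo (0 : ℝ) 1)
    (hrat : ∃ q : ℚ, (q : ℝ) = θ) :
    ∀ p : 𝕋, AccPt p (Filter.principal (Sset θ)) → IntP θ p ∨ SepP θ p := by
  intro p hacc
  obtain ⟨q, hq⟩ := hrat
  have hfin := PS_finite θ q hq
  have hC : IsClosed {p : 𝕋 | IntP θ p ∨ SepP θ p} := by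
    have h := compl_open θ hfin
    rw [show {p : 𝕋 | ¬(IntP θ p ∨ SepP θ p)} = {p : 𝕋 | IntP θ p ∨ SepP θ p}ᶜ from rfl]
      at h
    exact isOpen_compl_iff.mp h
  have h1 : p ∈ closure (Sset θ) :=
    mem_closure_iff_clusterPt.mpr (AccPt.clusterPt hacc)
  have h2 : Sset θ ⊆ {p : 𝕋 | IntP θ p ∨ SepP θ p} := by
    rintro r ⟨_, h⟩
    exact h.symm
  exact hC.closure_subset (closure_mono h2 h1)
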